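/- Suppose p : ℂ → ℂ restricted to the strip U₊ ∪ {Re h = 0} is the pointwise limit of analytic functions p_Λ whose k-th derivatives are bounded uniformly in Λ on U₊ = {0 < Re h < h₊}: sup_Λ ‖p_Λ^{(k)}‖_{U₊} ≤ M_k for every k. Then for real h' ≥ 0, the one-sided (right) derivatives p^{(k),←}(h') exist for all k and satisfy p^{(k),←}(h') = lim_{Λ} p_Λ^{(k)}(h') = lim_{h↘h'} p^{(k)}(h). -/

import Mathlib

open Filter Topology

lemma analyticAt_deriv' {f : ℂ → ℂ} {z : ℂ} (h : AnalyticAt ℂ f z) : AnalyticAt ℂ (deriv f) z :=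
  (AnalyticOnNhd.deriv (s := ({z} : Set ℂ))
    (fun w hw => by simpa [Set.mem_singleton_iff.mp hw] using h)) z rfl

lemma analyticAt_iteratedDeriv' {f : ℂ → ℂ} {z : ℂ} (h : AnalyticAt ℂ f z) (k : ℕ) :
    AnalyticAt ℂ (iteratedDeriv k f) z := by
  induction k with
  | zero => simpa [iteratedDeriv_zero] using h
  | succ k ih => rw [iteratedDeriv_succ]; exact analyticAt_deriv' ih

/-- Mean value inequality on a convex set for ℂ → ℂ using complex derivatives. -/
lemma lip_of_deriv_bound {s : Set ℂ} (hs : Convex ℝ s) {f f' : ℂ → ℂ} {C : ℝ}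
    (hf : ∀ u ∈ s, HasDerivAt f (f' u) u)
    (h1 : ∀ u ∈ s, ‖f' u‖ ≤ C)
    {z w : ℂ} (hz : z ∈ s) (hw : w ∈ s) : ‖f w - f z‖ ≤ C * ‖w - z‖ := by
  have := Convex.norm_image_sub_le_of_norm_hasFDerivWithin_le
    (f := f) (s := s) (C := C)
    (f' := fun u => (ContinuousLinearMap.smulRight (1 : ℂ →L[ℂ] ℂ) (f' u)).restrictScalars ℝ)
    (fun u hu => ((hf u hu).hasFDerivAt.restrictScalars ℝ).hasFDerivWithinAt)
    (fun u hu => by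
      rw [ContinuousLinearMap.norm_restrictScalars,
        ContinuousLinearMap.norm_smulRight_apply, norm_one, one_mul]
      exact h1 u hu)
    hs hz hw
  exact this

lemma norm_sub_le_of_mem_segment' {z w u : ℂ} (hu : u ∈ segment ℝ z w) :
    ‖u - z‖ ≤ ‖w - z‖ := by
  obtain ⟨a, b, ha, hb, hab, rfl⟩ := hu
  have : a • z + b • w - z = b • (w - z) := by
    have : a = 1 - b := by linarith
    subst this
    simp [sub_smul, smul_sub]
    ring
  rw [this, norm_smul]
  simp only [Real.norm_eq_abs, abs_of_nonneg hb]
  nlinarith [norm_nonneg (w - z)]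

/-- Quadratic Taylor bound. -/
lemma taylor_bound {s : Set ℂ} (hs : Convex ℝ s) {f f' f'' : ℂ → ℂ} {C : ℝ}
    (hf : ∀ u ∈ s, HasDerivAt f (f' u) u)
    (hf' : ∀ u ∈ s, HasDerivAt f' (f'' u) u)
    (h2 : ∀ u ∈ s, ‖f'' u‖ ≤ C) (hC : 0 ≤ C)
    {z w : ℂ} (hz : z ∈ s) (hw : w ∈ s) :
    ‖f w - f z - (w - z) * f' z‖ ≤ C * ‖w - z‖ * ‖w - z‖ := by
  set t : Set ℂ := segment ℝ z w with ht
  have hts : t ⊆ s := hs.segment_subset hz hw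
  have hlip : ∀ u ∈ t, ‖f' u - f' z‖ ≤ C * ‖w - z‖ := fun u hu => by
    calc ‖f' u - f' z‖ ≤ C * ‖u - z‖ := lip_of_deriv_bound hs hf' h2 hz (hts hu)
      _ ≤ C * ‖w - z‖ := by nlinarith [norm_sub_le_of_mem_segment' hu]
  have key : ‖(f w - w * f' z) - (f z - z * f' z)‖ ≤ (C * ‖w - z‖) * ‖w - z‖ :=
    lip_of_deriv_bound (convex_segment z w)
      (f := fun u => f u - u * f' z) (f' := fun u => f' u - f' z)
      (fun u hu => ((hf u (hts hu)).sub (by simpa using (hasDerivAt_id u).mul_const (f' z))))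
      hlip (left_mem_segment ℝ z w) (right_mem_segment ℝ z w)
  calc ‖f w - f z - (w - z) * f' z‖ = ‖(f w - w * f' z) - (f z - z * f' z)‖ := by ring_nf
    _ ≤ C * ‖w - z‖ * ‖w - z‖ := key

/-- Swap-of-limits / uniform approximation Cauchy lemma. -/
lemma exists_lim_of_approx {a : ℕ → ℂ} {D δ₀ : ℝ} (hδ₀ : 0 < δ₀)
    (h : ∀ δ : ℝ, 0 < δ → δ < δ₀ →
      ∃ b : ℕ → ℂ, (∀ n, ‖b n - a n‖ ≤ D * δ) ∧ ∃ L, Tendsto b atTop (𝓝 L)) :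
    ∃ A, Tendsto a atTop (𝓝 A) := by
  apply cauchySeq_tendsto_of_complete
  rw [Metric.cauchySeq_iff]
  intro ε hε
  set δ := min (δ₀ / 2) (ε / (4 * (|D| + 1))) with hδdef
  have hδpos : 0 < δ := lt_min (by linarith) (by positivity)
  have hδlt : δ < δ₀ := (min_le_left _ _).trans_lt (by linarith)
  obtain ⟨b, hb, L, hL⟩ := h δ hδpos hδlt
  have hDδ : D * δ ≤ ε / 4 := by
    have h1 : D * δ ≤ |D| * δ := by nlinarith [le_abs_self D, hδpos.le]
    have h2 : δ ≤ ε / (4 * (|D| + 1)) := min_le_right _ _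
    have h3 : |D| * δ ≤ |D| * (ε / (4 * (|D| + 1))) := by nlinarith [abs_nonneg D]
    have h4 : |D| * (ε / (4 * (|D| + 1))) ≤ ε / 4 := by
      rw [mul_div_assoc', div_le_div_iff₀ (by positivity) (by norm_num)]
      nlinarith [abs_nonneg D]
    linarith
  obtain ⟨N, hN⟩ := Metric.cauchySeq_iff.mp hL.cauchySeq (ε / 4) (by linarith)
  refine ⟨N, fun m hm n hn => ?_⟩
  have h1 : dist (a m) (b m) ≤ ε / 4 := by
    rw [dist_eq_norm, norm_sub_rev]; linarith [hb m]
  have h2 : dist (b n) (a n) ≤ ε / 4 := by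
    rw [dist_eq_norm]; linarith [hb n]
  have h3 := hN m hm n hn
  calc dist (a m) (a n) ≤ dist (a m) (b m) + dist (b m) (b n) + dist (b n) (a n) :=
        dist_triangle4 _ _ _ _
    _ < ε := by linarith




/-- Suppose `p` restricted to `U₊ ∪ {Re h = 0}`, where
`U₊ = {0 < Re h < h₊}`, is the pointwise limit of functions `p_Λ` analytic at
every point of `U₊ ∪ {Re h = 0}`, whose `k`-th derivatives are bounded on `U₊`
uniformly in `Λ`, for every `k`. Then for real `h' ∈ [0, h₊)` all iterated
one-sided (right) derivatives `p^{(k),←}(h')` exist (as the family `q k`)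
and satisfy `p^{(k),←}(h') = lim_Λ p_Λ^{(k)}(h') = lim_{h↘h'} p^{(k)}(h)`. -/
theorem stmt_19 (hplus : ℝ) (hh : 0 < hplus) (p : ℂ → ℂ) (pL : ℕ → ℂ → ℂ)
    (M : ℕ → ℝ)
    (hpL : ∀ n : ℕ, ∀ z : ℂ, ((0 < z.re ∧ z.re < hplus) ∨ z.re = 0) →
      AnalyticAt ℂ (pL n) z)
    (hbound : ∀ k n : ℕ, ∀ z : ℂ, (0 < z.re ∧ z.re < hplus) →
      ‖iteratedDeriv k (pL n) z‖ ≤ M k)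
    (hconv : ∀ z : ℂ, ((0 < z.re ∧ z.re < hplus) ∨ z.re = 0) →
      Filter.Tendsto (fun n => pL n z) Filter.atTop (nhds (p z))) :
    ∃ q : ℕ → ℝ → ℂ,
      (∀ x : ℝ, 0 ≤ x → x < hplus → q 0 x = p (x : ℂ)) ∧
      (∀ k : ℕ, ∀ x : ℝ, 0 ≤ x → x < hplus →
        Filter.Tendsto (fun y : ℝ => (q k y - q k x) / ((y : ℂ) - (x : ℂ)))
          (nhdsWithin x (Set.Ioi x)) (nhds (q (k + 1) x))) ∧
      ∀ k : ℕ, ∀ h' : ℝ, 0 ≤ h' → h' < hplus →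
        Filter.Tendsto (fun n => iteratedDeriv k (pL n) (h' : ℂ))
          Filter.atTop (nhds (q k h')) ∧
        Filter.Tendsto (fun h : ℝ => iteratedDeriv k p (h : ℂ))
          (nhdsWithin h' (Set.Ioi h')) (nhds (q k h')) := by
    classical
  set R : Set ℂ := {z : ℂ | 0 ≤ z.re ∧ z.re < hplus} with hRdef
  have hRmem : ∀ z : ℂ, z ∈ R ↔ (0 ≤ z.re ∧ z.re < hplus) := fun z => Iff.rfl
  have hmem : ∀ z : ℂ, z ∈ R ↔ ((0 < z.re ∧ z.re < hplus) ∨ z.re = 0) := by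
    intro z
    rw [hRmem]
    constructor
    · rintro ⟨h0, h1⟩
      rcases h0.lt_or_eq with h | h
      · exact Or.inl ⟨h, h1⟩
      · exact Or.inr h.symm
    · rintro (⟨h0, h1⟩ | h0)
      · exact ⟨h0.le, h1⟩
      · exact ⟨h0.ge, by rw [h0]; exact hh⟩
  have hconvexR : Convex ℝ R := by
    have : R = Complex.reLm ⁻¹' Set.Ico 0 hplus := rfl
    rw [this]
    exact (convex_Ico 0 hplus).linear_preimage _
  have hAnal : ∀ (n k : ℕ) (z : ℂ), z ∈ R → AnalyticAt ℂ (iteratedDeriv k (pL n)) z :=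
    fun n k z hz => analyticAt_iteratedDeriv' (hpL n z ((hmem z).mp hz)) k
  have hd : ∀ (n k : ℕ) (u : ℂ), u ∈ R →
      HasDerivAt (iteratedDeriv k (pL n)) (iteratedDeriv (k+1) (pL n) u) u := by
    intro n k u hu
    rw [iteratedDeriv_succ]
    exact (hAnal n k u hu).differentiableAt.hasDerivAt
  have hbound' : ∀ (k n : ℕ) (z : ℂ), z ∈ R → ‖iteratedDeriv k (pL n) z‖ ≤ M k := by
    intro k n z hz
    rcases (hmem z).mp hz with h | h
    · exact hbound k n z h
    · have hcont : ContinuousAt (iteratedDeriv k (pL n)) z := (hAnal n k z hz).continuousAt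
      have h1 : Tendsto (fun t : ℝ => z + (t : ℂ)) (𝓝[>] (0:ℝ)) (𝓝 z) := by
        have h2 : Tendsto (fun t : ℝ => z + (t : ℂ)) (𝓝 (0:ℝ)) (𝓝 (z + ((0:ℝ) : ℂ))) :=
          (continuous_const.add Complex.continuous_ofReal).tendsto 0
        simpa using h2.mono_left nhdsWithin_le_nhds
      have htend : Tendsto (fun t : ℝ => ‖iteratedDeriv k (pL n) (z + (t:ℂ))‖) (𝓝[>] (0:ℝ))
          (𝓝 ‖iteratedDeriv k (pL n) z‖) := (hcont.tendsto.comp h1).norm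
      refine le_of_tendsto htend ?_
      filter_upwards [Ioo_mem_nhdsGT_of_mem (⟨le_refl (0:ℝ), hh⟩ : (0:ℝ) ∈ Set.Ico 0 hplus)]
        with t ht
      exact hbound k n _ ⟨by simp [h, ht.1], by simp [h, ht.2]⟩
  have hM : ∀ k, 0 ≤ M k := by
    intro k
    refine le_trans (norm_nonneg (iteratedDeriv k (pL 0) ((hplus/2 : ℝ) : ℂ)))
      (hbound k 0 _ ⟨?_, ?_⟩)
    · simp; linarith
    · simp; linarith
  have hLip : ∀ (k n : ℕ) {z w : ℂ}, z ∈ R → w ∈ R →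
      ‖iteratedDeriv k (pL n) w - iteratedDeriv k (pL n) z‖ ≤ M (k+1) * ‖w - z‖ :=
    fun k n {z w} hz hw =>
      lip_of_deriv_bound hconvexR (hd n k) (fun u hu => hbound' (k+1) n u hu) hz hw
  have hTay : ∀ (k n : ℕ) {z w : ℂ}, z ∈ R → w ∈ R →
      ‖iteratedDeriv k (pL n) w - iteratedDeriv k (pL n) z
        - (w - z) * iteratedDeriv (k+1) (pL n) z‖ ≤ M (k+2) * ‖w - z‖ * ‖w - z‖ :=
    fun k n {z w} hz hw => taylor_bound hconvexR (hd n k) (hd n (k+1))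
      (fun u hu => hbound' (k+2) n u hu) (hM (k+2)) hz hw
  -- existence of limits of all iterated derivatives on R
  have hEx : ∀ (k : ℕ) (z : ℂ), z ∈ R →
      ∃ L, Tendsto (fun n => iteratedDeriv k (pL n) z) atTop (𝓝 L) := by
    intro k
    induction k with
    | zero =>
      intro z hz
      exact ⟨p z, by simpa [iteratedDeriv_zero] using hconv z ((hmem z).mp hz)⟩
    | succ k ih =>
      intro z hz
      have hz' := (hRmem z).mp hz
      have hδ₀ : 0 < hplus - z.re := by linarith [hz'.2]
      apply exists_lim_of_approx (D := M (k+2)) hδ₀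
      intro δ hδ hδlt
      have hzδ : (z + (δ:ℂ)) ∈ R := (hRmem _).mpr ⟨by simp; linarith [hz'.1], by simp; linarith⟩
      refine ⟨fun n => (iteratedDeriv k (pL n) (z + (δ:ℂ)) - iteratedDeriv k (pL n) z) / (δ:ℂ),
        ?_, ?_⟩
      · intro n
        have key := hTay k n hz hzδ
        have hne : ((δ:ℝ):ℂ) ≠ 0 := by exact_mod_cast hδ.ne'
        have heq : (iteratedDeriv k (pL n) (z + (δ:ℂ)) - iteratedDeriv k (pL n) z) / (δ:ℂ)
            - iteratedDeriv (k+1) (pL n) z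
            = (iteratedDeriv k (pL n) (z + (δ:ℂ)) - iteratedDeriv k (pL n) z
              - ((z + (δ:ℂ)) - z) * iteratedDeriv (k+1) (pL n) z) / (δ:ℂ) := by
          field_simp
          ring
        rw [heq, norm_div]
        have hnδ : ‖((δ:ℝ):ℂ)‖ = δ := by
          rw [Complex.norm_real, Real.norm_eq_abs, abs_of_pos hδ]
        have hwz : ‖(z + (δ:ℂ)) - z‖ = δ := by rw [add_sub_cancel_left]; exact hnδ
        rw [hnδ, div_le_iff₀ hδ]
        refine le_trans key (le_of_eq ?_)
        rw [hwz]
      · obtain ⟨L1, hL1⟩ := ih (z + (δ:ℂ)) hzδ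
        obtain ⟨L2, hL2⟩ := ih z hz
        exact ⟨(L1 - L2) / (δ:ℂ), (hL1.sub hL2).div_const _⟩
  have hEx' : ∀ (k : ℕ) (z : ℂ), ∃ L, z ∈ R →
      Tendsto (fun n => iteratedDeriv k (pL n) z) atTop (𝓝 L) := by
    intro k z
    by_cases hz : z ∈ R
    · obtain ⟨L, hL⟩ := hEx k z hz; exact ⟨L, fun _ => hL⟩
    · exact ⟨0, fun h => absurd h hz⟩
  choose Q hQ using hEx'
  have hQTay : ∀ (k : ℕ) {z w : ℂ}, z ∈ R → w ∈ R →
      ‖Q k w - Q k z - (w - z) * Q (k+1) z‖ ≤ M (k+2) * ‖w - z‖ * ‖w - z‖ := by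
    intro k z w hz hw
    have ht : Tendsto (fun n => iteratedDeriv k (pL n) w - iteratedDeriv k (pL n) z
        - (w - z) * iteratedDeriv (k+1) (pL n) z) atTop
        (𝓝 (Q k w - Q k z - (w - z) * Q (k+1) z)) :=
      ((hQ k w hw).sub (hQ k z hz)).sub (tendsto_const_nhds.mul (hQ (k+1) z hz))
    exact le_of_tendsto ht.norm (Filter.Eventually.of_forall (fun n => hTay k n hz hw))
  have hQLip : ∀ (k : ℕ) {z w : ℂ}, z ∈ R → w ∈ R →
      ‖Q k w - Q k z‖ ≤ M (k+1) * ‖w - z‖ := by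
    intro k z w hz hw
    have ht : Tendsto (fun n => iteratedDeriv k (pL n) w - iteratedDeriv k (pL n) z) atTop
        (𝓝 (Q k w - Q k z)) := (hQ k w hw).sub (hQ k z hz)
    exact le_of_tendsto ht.norm (Filter.Eventually.of_forall (fun n => hLip k n hz hw))
  have hQ0 : ∀ z ∈ R, Q 0 z = p z := fun z hz =>
    tendsto_nhds_unique (by simpa [iteratedDeriv_zero] using hQ 0 z hz)
      (hconv z ((hmem z).mp hz))
  have hUopen : IsOpen {z : ℂ | 0 < z.re ∧ z.re < hplus} :=
    isOpen_Ioo.preimage Complex.continuous_re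
  have hUR : {z : ℂ | 0 < z.re ∧ z.re < hplus} ⊆ R := fun z hz => ⟨hz.1.le, hz.2⟩
  have hQd : ∀ (k : ℕ) (z : ℂ), z ∈ {z : ℂ | 0 < z.re ∧ z.re < hplus} →
      HasDerivAt (Q k) (Q (k+1) z) z := by
    intro k z hz
    rw [hasDerivAt_iff_isLittleO, Asymptotics.isLittleO_iff]
    intro c hc
    have hball : ∀ᶠ w in 𝓝 z, ‖w - z‖ ≤ c / (M (k+2) + 1) := by
      filter_upwards [Metric.ball_mem_nhds z (show (0:ℝ) < c / (M (k+2) + 1) from div_pos hc (by linarith [hM (k+2)]))]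
        with w hw
      rw [Metric.mem_ball, dist_eq_norm] at hw
      exact hw.le
    filter_upwards [hUopen.mem_nhds hz, hball] with w hw hwb
    have h1 := hQTay k (hUR hz) (hUR hw)
    have h3 : M (k+2) * ‖w - z‖ ≤ c := by
      have h4 : M (k+2) * ‖w - z‖ ≤ M (k+2) * (c / (M (k+2) + 1)) := by
        nlinarith [hM (k+2)]
      have h5 : M (k+2) * (c / (M (k+2) + 1)) ≤ c := by
        rw [mul_div_assoc', div_le_iff₀ (by linarith [hM (k+2)])]
        nlinarith [hM (k+2), hc.le]
      linarith
    have h2 : M (k+2) * ‖w - z‖ * ‖w - z‖ ≤ c * ‖w - z‖ := by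
      nlinarith [norm_nonneg (w - z)]
    calc ‖Q k w - Q k z - (w - z) • Q (k+1) z‖
        = ‖Q k w - Q k z - (w - z) * Q (k+1) z‖ := by rw [smul_eq_mul]
      _ ≤ M (k+2) * ‖w - z‖ * ‖w - z‖ := h1
      _ ≤ c * ‖w - z‖ := h2
  have hiter : ∀ (k : ℕ) (z : ℂ), (0 < z.re ∧ z.re < hplus) → iteratedDeriv k p z = Q k z := by
    intro k
    induction k with
    | zero =>
      intro z hz
      rw [iteratedDeriv_zero]
      exact (hQ0 z (hUR hz)).symm
    | succ k ih =>
      intro z hz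
      rw [iteratedDeriv_succ]
      have heq : iteratedDeriv k p =ᶠ[𝓝 z] Q k := by
        filter_upwards [hUopen.mem_nhds hz] with w hw
        exact ih w hw
      rw [heq.deriv_eq]
      exact (hQd k z hz).deriv
  have hRreal : ∀ x : ℝ, 0 ≤ x → x < hplus → ((x:ℂ) ∈ R) :=
    fun x h1 h2 => (hRmem _).mpr ⟨by simpa using h1, by simpa using h2⟩
  refine ⟨fun k x => Q k (x:ℂ), fun x h1 h2 => hQ0 _ (hRreal x h1 h2), ?_, ?_⟩
  · -- one-sided difference quotients
    intro k x hx0 hxp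
    rw [← tendsto_sub_nhds_zero_iff]
    apply squeeze_zero_norm' (a := fun y : ℝ => M (k+2) * (y - x))
    · filter_upwards [Ioo_mem_nhdsGT_of_mem (⟨le_refl x, hxp⟩ : x ∈ Set.Ico x hplus)]
        with y hy
      have hyR : ((y:ℂ)) ∈ R := hRreal y (le_trans hx0 hy.1.le) hy.2
      have hxR := hRreal x hx0 hxp
      have key := hQTay k hxR hyR
      have hyx : (0:ℝ) < y - x := by linarith [hy.1]
      have hne : (y:ℂ) - (x:ℂ) ≠ 0 := by
        rw [← Complex.ofReal_sub]
        exact_mod_cast hyx.ne'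
      have heq : (Q k (y:ℂ) - Q k (x:ℂ)) / ((y:ℂ) - (x:ℂ)) - Q (k+1) (x:ℂ)
          = (Q k (y:ℂ) - Q k (x:ℂ) - ((y:ℂ) - (x:ℂ)) * Q (k+1) (x:ℂ)) / ((y:ℂ) - (x:ℂ)) := by
        field_simp
      have hnrm : ‖(y:ℂ) - (x:ℂ)‖ = y - x := by
        rw [← Complex.ofReal_sub, Complex.norm_real, Real.norm_eq_abs, abs_of_pos hyx]
      rw [heq, norm_div, hnrm, div_le_iff₀ hyx]
      refine le_trans key (le_of_eq ?_)
      rw [hnrm]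
    · have h6 : Tendsto (fun y : ℝ => M (k+2) * (y - x)) (𝓝 x) (𝓝 (M (k+2) * (x - x))) :=
        (tendsto_id.sub tendsto_const_nhds).const_mul _
      simpa using h6.mono_left nhdsWithin_le_nhds
  · intro k h' h0 hp'
    refine ⟨hQ k _ (hRreal h' h0 hp'), ?_⟩
    have hQcont : Tendsto (fun h : ℝ => Q k (h:ℂ)) (𝓝[>] h') (𝓝 (Q k ((h':ℝ):ℂ))) := by
      rw [← tendsto_sub_nhds_zero_iff]
      apply squeeze_zero_norm' (a := fun y : ℝ => M (k+1) * (y - h'))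
      · filter_upwards [Ioo_mem_nhdsGT_of_mem (⟨le_refl h', hp'⟩ : h' ∈ Set.Ico h' hplus)]
          with y hy
        have hyR : ((y:ℂ)) ∈ R := hRreal y (le_trans h0 hy.1.le) hy.2
        have key := hQLip k (hRreal h' h0 hp') hyR
        have hyx : (0:ℝ) < y - h' := by linarith [hy.1]
        have hnrm : ‖(y:ℂ) - ((h':ℝ):ℂ)‖ = y - h' := by
          rw [← Complex.ofReal_sub, Complex.norm_real, Real.norm_eq_abs, abs_of_pos hyx]
        rw [hnrm] at key
        exact key
      · have h6 : Tendsto (fun y : ℝ => M (k+1) * (y - h')) (𝓝 h') (𝓝 (M (k+1) * (h' - h'))) :=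
          (tendsto_id.sub tendsto_const_nhds).const_mul _
        simpa using h6.mono_left nhdsWithin_le_nhds
    refine Filter.Tendsto.congr' ?_ hQcont
    filter_upwards [Ioo_mem_nhdsGT_of_mem (⟨le_refl h', hp'⟩ : h' ∈ Set.Ico h' hplus)]
      with y hy
    exact (hiter k (y:ℂ) ⟨by simpa using lt_of_le_of_lt h0 hy.1, by simpa using hy.2⟩).symm
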